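/- Let q > 1 be a real number, m ∈ ℤ, N ≥ 1 a natural number, and t ≥ 3 a real number. Let u : ℤ → ℝ satisfy u_k ≥ 0 and u_k ≤ u_{k+1} for all k. If for every integer k with m ≤ k ≤ m+N−1 one has u_k^{t−2}·(u_{k+1} − u_k)/((q−1)·q^k) ≥ (t−2)·q·u_{k+2}^{t−2}·(q^{k+2} − q^m)^{t−3}, then Σ_{k=m}^{m+N−1} (q−1)·q^k·u_k^t − (Σ_{k=m}^{m+N−1} (q−1)·q^k·u_k)^{t−1} ≥ u_m^{t−2}·(u_m − (t−1)·((q−1)·q^m)^{t−2}) · Σ_{k=m}^{m+N−1} (q−1)·q^k·u_k. -/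

import Mathlib

open Real Finset

/-- Lower bound: `b^p - a^p ≥ p * a^(p-1) * (b - a)` for `0 ≤ a ≤ b`, `1 ≤ p`. -/
lemma qi_rpow_lb {p a b : ℝ} (hp : 1 ≤ p) (ha : 0 ≤ a) (hab : a ≤ b) :
    p * a ^ (p - 1) * (b - a) ≤ b ^ p - a ^ p := by
  rcases eq_or_lt_of_le ha with h0 | h0
  · subst h0
    rcases eq_or_lt_of_le hp with hp1 | hp1
    · subst hp1
      simp
    · rw [Real.zero_rpow (by linarith), Real.zero_rpow (by linarith)]
      have : (0:ℝ) ≤ b ^ p := Real.rpow_nonneg hab p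
      linarith
  · have hb : 0 < b := lt_of_lt_of_le h0 hab
    have hs : -1 ≤ (b - a) / a := by
      have : 0 ≤ (b - a) / a := div_nonneg (by linarith) h0.le
      linarith
    have hbern := one_add_mul_self_le_rpow_one_add hs hp
    have h1s : 1 + (b - a) / a = b / a := by field_simp; ring
    rw [h1s, Real.div_rpow (by linarith) h0.le] at hbern
    have hap : 0 < a ^ p := Real.rpow_pos_of_pos h0 p
    have hmul := mul_le_mul_of_nonneg_right hbern hap.le
    rw [div_mul_cancel₀ _ hap.ne'] at hmul
    have hkey : (1 + p * ((b - a) / a)) * a ^ p = a ^ p + p * a ^ (p - 1) * (b - a) := by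
      have : a ^ (p - 1) = a ^ p / a := by
        rw [Real.rpow_sub h0, Real.rpow_one]
      rw [this]
      field_simp
    rw [hkey] at hmul
    linarith

/-- Upper bound: `b^p - a^p ≤ p * b^(p-1) * (b - a)` for `0 ≤ a ≤ b`, `1 ≤ p`. -/
lemma qi_rpow_ub {p a b : ℝ} (hp : 1 ≤ p) (ha : 0 ≤ a) (hab : a ≤ b) :
    b ^ p - a ^ p ≤ p * b ^ (p - 1) * (b - a) := by
  rcases eq_or_lt_of_le (ha.trans hab) with h0 | h0
  · have hb0 : b = 0 := h0.symm
    have ha0 : a = 0 := le_antisymm (hab.trans_eq hb0) ha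
    subst hb0; subst ha0
    simp
  · have hs : -1 ≤ (a - b) / b := by
      rw [sub_div, div_self h0.ne']
      have : 0 ≤ a / b := div_nonneg ha h0.le
      linarith
    have hbern := one_add_mul_self_le_rpow_one_add hs hp
    have h1s : 1 + (a - b) / b = a / b := by field_simp; ring
    rw [h1s, Real.div_rpow ha h0.le] at hbern
    have hbp : 0 < b ^ p := Real.rpow_pos_of_pos h0 p
    have hmul := mul_le_mul_of_nonneg_right hbern hbp.le
    rw [div_mul_cancel₀ _ hbp.ne'] at hmul
    have hkey : (1 + p * ((a - b) / b)) * b ^ p = b ^ p - p * b ^ (p - 1) * (b - a) := by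
      have : b ^ (p - 1) = b ^ p / b := by
        rw [Real.rpow_sub h0, Real.rpow_one]
      rw [this]
      field_simp
      ring
    rw [hkey] at hmul
    linarith

theorem qi_time_scale_qZ_thm31
    (q : ℝ) (hq : 1 < q) (m : ℤ) (N : ℕ) (hN : 1 ≤ N) (t : ℝ) (ht : 3 ≤ t)
    (u : ℤ → ℝ)
    (hnonneg : ∀ k : ℤ, 0 ≤ u k)
    (hmono : ∀ k : ℤ, u k ≤ u (k + 1))
    (hyp : ∀ k : ℤ, m ≤ k → k ≤ m + (N : ℤ) - 1 →
      (t - 2) * q * u (k + 2) ^ (t - 2) * (q ^ (k + 2) - q ^ m) ^ (t - 3) ≤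
        u k ^ (t - 2) * (u (k + 1) - u k) / ((q - 1) * q ^ k)) :
    (∑ k ∈ Finset.Icc m (m + (N : ℤ) - 1), (q - 1) * q ^ k * u k ^ t) -
        (∑ k ∈ Finset.Icc m (m + (N : ℤ) - 1), (q - 1) * q ^ k * u k) ^ (t - 1) ≥
      u m ^ (t - 2) * (u m - (t - 1) * ((q - 1) * q ^ m) ^ (t - 2)) *
        ∑ k ∈ Finset.Icc m (m + (N : ℤ) - 1), (q - 1) * q ^ k * u k := by
  have hq0 : (0:ℝ) < q := lt_trans one_pos hq
  have hqz : ∀ k : ℤ, (0:ℝ) < q ^ k := fun k => zpow_pos hq0 k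
  have hw : ∀ k : ℤ, 0 < (q - 1) * q ^ k := fun k => mul_pos (by linarith) (hqz k)
  have humono : Monotone u := monotone_int_of_le_succ hmono
  -- weights and partial sums, indexed over ℕ
  set w : ℕ → ℝ := fun i => (q - 1) * q ^ (m + (i : ℤ)) with hw_def
  have hw0 : ∀ i, 0 < w i := fun i => hw _
  set S : ℕ → ℝ := fun n => ∑ i ∈ Finset.range n, w i * u (m + (i : ℤ)) with hS_def
  have hS_succ : ∀ n, S (n + 1) = S n + w n * u (m + (n : ℤ)) := by
    intro n; simp [hS_def, Finset.sum_range_succ]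
  have hS_nonneg : ∀ n, 0 ≤ S n := by
    intro n
    apply Finset.sum_nonneg
    intro i _
    exact mul_nonneg (hw0 i).le (hnonneg _)
  have hS_mono : ∀ n, S n ≤ S (n + 1) := by
    intro n
    rw [hS_succ]
    have : 0 ≤ w n * u (m + (n : ℤ)) := mul_nonneg (hw0 n).le (hnonneg _)
    linarith
  -- telescoping sum of weights
  have hT : ∀ n : ℕ, (∑ i ∈ Finset.range n, w i) = q ^ (m + (n : ℤ)) - q ^ m := by
    intro n
    induction n with
    | zero => simp
    | succ n ih =>
      rw [Finset.sum_range_succ, ih]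
      have h1 : (m + ((n : ℤ) + 1)) = (m + (n : ℤ)) + 1 := by ring
      have h2 : q ^ ((m + (n : ℤ)) + 1) = q ^ (m + (n : ℤ)) * q := by
        rw [zpow_add_one₀ hq0.ne']
      push_cast
      rw [h1, h2]
      simp only [hw_def]
      ring
  -- upper bound for partial sums
  have hSle : ∀ n : ℕ, S n ≤ u (m + (n : ℤ)) * (q ^ (m + (n : ℤ)) - q ^ m) := by
    intro n
    calc S n ≤ ∑ i ∈ Finset.range n, w i * u (m + (n : ℤ)) := by
          apply Finset.sum_le_sum
          intro i hi
          have : (m + (i : ℤ)) ≤ m + (n : ℤ) := by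
            have := Finset.mem_range.mp hi
            omega
          exact mul_le_mul_of_nonneg_left (humono this) (hw0 i).le
      _ = (∑ i ∈ Finset.range n, w i) * u (m + (n : ℤ)) := by
          rw [← Finset.sum_mul]
      _ = u (m + (n : ℤ)) * (q ^ (m + (n : ℤ)) - q ^ m) := by rw [hT]; ring
  -- rpow splitting facts
  have ht1 : (1:ℝ) ≤ t - 1 := by linarith
  have ht2 : (1:ℝ) ≤ t - 2 := by linarith
  have ht3 : (0:ℝ) ≤ t - 3 := by linarith
  have hxt : ∀ x : ℝ, 0 ≤ x → x ^ t = x * x ^ (t - 1) := by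
    intro x hx
    rcases eq_or_lt_of_le hx with h0 | h0
    · rw [← h0, Real.zero_rpow (by linarith), Real.zero_rpow (by linarith), mul_zero]
    · have h := Real.rpow_add h0 1 (t - 1)
      rw [Real.rpow_one, show (1:ℝ) + (t - 1) = t by ring] at h
      exact h
  have hxt1 : ∀ x : ℝ, 0 ≤ x → x ^ (t - 1) = x ^ (t - 2) * x := by
    intro x hx
    rcases eq_or_lt_of_le hx with h0 | h0
    · rw [← h0, Real.zero_rpow (by linarith), Real.zero_rpow (by linarith), zero_mul]
    · have h := Real.rpow_add h0 (t - 2) 1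
      rw [Real.rpow_one, show t - 2 + 1 = t - 1 by ring] at h
      exact h
  have hxt2 : ∀ x : ℝ, 0 ≤ x → x ^ (t - 3) * x = x ^ (t - 2) := by
    intro x hx
    rcases eq_or_lt_of_le hx with h0 | h0
    · rw [← h0, mul_zero, Real.zero_rpow (show t - 2 ≠ 0 by norm_num; linarith)]
    · have h := Real.rpow_add h0 (t - 3) 1
      rw [Real.rpow_one, show t - 3 + 1 = t - 2 by ring] at h
      exact h.symm
  set c : ℝ := u m ^ (t - 2) * (u m - (t - 1) * ((q - 1) * q ^ m) ^ (t - 2)) with hc_def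
  -- Key lemma: c ≤ u(m+n)^(t-1) - (t-1) * S(n+1)^(t-2) for n < N
  have hA : ∀ n : ℕ, n < N → c ≤ u (m + (n : ℤ)) ^ (t - 1) - (t - 1) * S (n + 1) ^ (t - 2) := by
    intro n hn
    induction n with
    | zero =>
      have hum : 0 ≤ u m := hnonneg m
      have hS1 : S 1 = (q - 1) * q ^ m * u m := by
        simp [hS_def, hw_def]
      have hmul : ((q - 1) * q ^ m * u m) ^ (t - 2) =
          ((q - 1) * q ^ m) ^ (t - 2) * u m ^ (t - 2) := Real.mul_rpow (hw m).le hum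
      have h3 : u m ^ (t - 2) * u m = u m ^ (t - 1) := (hxt1 (u m) hum).symm
      have hgoal : c = u m ^ (t - 1) - (t - 1) * (((q - 1) * q ^ m * u m) ^ (t - 2)) := by
        rw [hmul, hc_def, mul_sub, h3]
        ring
      simp only [Nat.cast_zero, add_zero, zero_add]
      rw [hS1, hgoal]
    | succ n ih =>
      have hn' : n < N := by omega
      have IH := ih hn'
      -- suffices: increments
      have hstep : (t - 1) * (S (n + 2) ^ (t - 2) - S (n + 1) ^ (t - 2)) ≤
          u (m + ((n : ℤ) + 1)) ^ (t - 1) - u (m + (n : ℤ)) ^ (t - 1) := by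
        -- upper bound on RHS increment
        have hub : S (n + 2) ^ (t - 2) - S (n + 1) ^ (t - 2) ≤
            (t - 2) * S (n + 2) ^ (t - 3) * (S (n + 2) - S (n + 1)) := by
          have := qi_rpow_ub (p := t - 2) (a := S (n + 1)) (b := S (n + 2)) ht2
            (hS_nonneg _) (hS_mono _)
          have he : t - 2 - 1 = t - 3 := by ring
          rwa [he] at this
        have hdiff : S (n + 2) - S (n + 1) = w (n + 1) * u (m + ((n : ℤ) + 1)) := by
          rw [hS_succ (n + 1)]
          push_cast
          ring
        -- lower bound on LHS increment
        have hlb : (t - 1) * (u (m + (n : ℤ)) ^ (t - 2) *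
              (u (m + ((n : ℤ) + 1)) - u (m + (n : ℤ)))) ≤
            u (m + ((n : ℤ) + 1)) ^ (t - 1) - u (m + (n : ℤ)) ^ (t - 1) := by
          have := qi_rpow_lb (p := t - 1) (a := u (m + (n : ℤ))) (b := u (m + ((n : ℤ) + 1)))
            ht1 (hnonneg _) (humono (by omega))
          have he : t - 1 - 1 = t - 2 := by ring
          rw [he, mul_assoc] at this
          exact this
        -- bound S(n+2)^(t-3) * u(m+n+1)
        have hSb : S (n + 2) ≤ u (m + ((n : ℤ) + 2)) * (q ^ (m + ((n : ℤ) + 2)) - q ^ m) := by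
          have h1 := hSle (n + 2)
          have h2 : (m + (((n : ℕ) + 2 : ℕ) : ℤ)) = m + ((n : ℤ) + 2) := by push_cast; ring
          rw [h2] at h1
          exact h1
        have hqm : (0:ℝ) ≤ q ^ (m + ((n : ℤ) + 2)) - q ^ m := by
          have : q ^ m ≤ q ^ (m + ((n : ℤ) + 2)) := by
            apply zpow_le_zpow_right₀ hq.le
            omega
          linarith
        have hu2 : 0 ≤ u (m + ((n : ℤ) + 2)) := hnonneg _
        have hkey2 : S (n + 2) ^ (t - 3) * u (m + ((n : ℤ) + 1)) ≤
            u (m + ((n : ℤ) + 2)) ^ (t - 2) * (q ^ (m + ((n : ℤ) + 2)) - q ^ m) ^ (t - 3) := by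
          have hb1 : S (n + 2) ^ (t - 3) ≤
              (u (m + ((n : ℤ) + 2)) * (q ^ (m + ((n : ℤ) + 2)) - q ^ m)) ^ (t - 3) :=
            Real.rpow_le_rpow (hS_nonneg _) hSb ht3
          have hb2 : (u (m + ((n : ℤ) + 2)) * (q ^ (m + ((n : ℤ) + 2)) - q ^ m)) ^ (t - 3) =
              u (m + ((n : ℤ) + 2)) ^ (t - 3) * (q ^ (m + ((n : ℤ) + 2)) - q ^ m) ^ (t - 3) :=
            Real.mul_rpow hu2 hqm
          have hb3 : u (m + ((n : ℤ) + 1)) ≤ u (m + ((n : ℤ) + 2)) := humono (by omega)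
          calc S (n + 2) ^ (t - 3) * u (m + ((n : ℤ) + 1))
              ≤ (u (m + ((n : ℤ) + 2)) ^ (t - 3) * (q ^ (m + ((n : ℤ) + 2)) - q ^ m) ^ (t - 3)) *
                u (m + ((n : ℤ) + 2)) := by
                apply mul_le_mul (hb2 ▸ hb1) hb3 (hnonneg _)
                positivity
            _ = (u (m + ((n : ℤ) + 2)) ^ (t - 3) * u (m + ((n : ℤ) + 2))) *
                (q ^ (m + ((n : ℤ) + 2)) - q ^ m) ^ (t - 3) := by ring
            _ = u (m + ((n : ℤ) + 2)) ^ (t - 2) * (q ^ (m + ((n : ℤ) + 2)) - q ^ m) ^ (t - 3) := by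
                rw [hxt2 _ hu2]
        -- hypothesis at k = m + n
        have hk1 : m ≤ m + (n : ℤ) := by omega
        have hk2 : m + (n : ℤ) ≤ m + (N : ℤ) - 1 := by omega
        have hhyp := hyp (m + (n : ℤ)) hk1 hk2
        have hwn : w n = (q - 1) * q ^ (m + (n : ℤ)) := rfl
        have hwn1 : w (n + 1) = q * w n := by
          simp only [hw_def]
          push_cast
          rw [show m + ((n : ℤ) + 1) = (m + (n : ℤ)) + 1 by ring, zpow_add_one₀ hq0.ne']
          ring
        -- rearrange hypothesis: multiply by w n > 0
        have hhyp' : (t - 2) * q * u (m + (n : ℤ) + 2) ^ (t - 2) *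
            (q ^ (m + (n : ℤ) + 2) - q ^ m) ^ (t - 3) * w n ≤
            u (m + (n : ℤ)) ^ (t - 2) * (u (m + (n : ℤ) + 1) - u (m + (n : ℤ))) := by
          have := mul_le_mul_of_nonneg_right hhyp (hw0 n).le
          rwa [div_mul_cancel₀ _ (hw (m + (n : ℤ))).ne'] at this
        have hidx1 : m + (n : ℤ) + 2 = m + ((n : ℤ) + 2) := by ring
        have hidx2 : m + (n : ℤ) + 1 = m + ((n : ℤ) + 1) := by ring
        rw [hidx1, hidx2] at hhyp'
        -- combine
        have hc1 : (t - 1) * (S (n + 2) ^ (t - 2) - S (n + 1) ^ (t - 2)) ≤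
            (t - 1) * ((t - 2) * S (n + 2) ^ (t - 3) * (w (n + 1) * u (m + ((n : ℤ) + 1)))) := by
          have h := hub
          rw [hdiff] at h
          exact mul_le_mul_of_nonneg_left h (by linarith : (0:ℝ) ≤ t - 1)
        have hc2 : (t - 2) * S (n + 2) ^ (t - 3) * (w (n + 1) * u (m + ((n : ℤ) + 1))) ≤
            (t - 2) * q * u (m + ((n : ℤ) + 2)) ^ (t - 2) *
              (q ^ (m + ((n : ℤ) + 2)) - q ^ m) ^ (t - 3) * w n := by
          rw [hwn1]
          have := mul_le_mul_of_nonneg_left hkey2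
            (mul_nonneg (mul_nonneg (show (0:ℝ) ≤ t - 2 by linarith) hq0.le) (hw0 n).le)
          calc (t - 2) * S (n + 2) ^ (t - 3) * (q * w n * u (m + ((n : ℤ) + 1)))
              = (t - 2) * q * w n * (S (n + 2) ^ (t - 3) * u (m + ((n : ℤ) + 1))) := by ring
            _ ≤ (t - 2) * q * w n * (u (m + ((n : ℤ) + 2)) ^ (t - 2) *
                (q ^ (m + ((n : ℤ) + 2)) - q ^ m) ^ (t - 3)) := this
            _ = (t - 2) * q * u (m + ((n : ℤ) + 2)) ^ (t - 2) *
                (q ^ (m + ((n : ℤ) + 2)) - q ^ m) ^ (t - 3) * w n := by ring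
        have hc3 : (t - 1) * ((t - 2) * q * u (m + ((n : ℤ) + 2)) ^ (t - 2) *
              (q ^ (m + ((n : ℤ) + 2)) - q ^ m) ^ (t - 3) * w n) ≤
            (t - 1) * (u (m + (n : ℤ)) ^ (t - 2) * (u (m + ((n : ℤ) + 1)) - u (m + (n : ℤ)))) :=
          mul_le_mul_of_nonneg_left hhyp' (by linarith)
        have hc4 := mul_le_mul_of_nonneg_left hc2 (by linarith : (0:ℝ) ≤ t - 1)
        calc (t - 1) * (S (n + 2) ^ (t - 2) - S (n + 1) ^ (t - 2))
            ≤ (t - 1) * ((t - 2) * S (n + 2) ^ (t - 3) * (w (n + 1) * u (m + ((n : ℤ) + 1)))) :=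
              hc1
          _ ≤ (t - 1) * ((t - 2) * q * u (m + ((n : ℤ) + 2)) ^ (t - 2) *
              (q ^ (m + ((n : ℤ) + 2)) - q ^ m) ^ (t - 3) * w n) := hc4
          _ ≤ (t - 1) * (u (m + (n : ℤ)) ^ (t - 2) *
              (u (m + ((n : ℤ) + 1)) - u (m + (n : ℤ)))) := hc3
          _ ≤ u (m + ((n : ℤ) + 1)) ^ (t - 1) - u (m + (n : ℤ)) ^ (t - 1) := hlb
      have hidx : (m + (((n : ℕ) + 1 : ℕ) : ℤ)) = m + ((n : ℤ) + 1) := by push_cast; ring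
      rw [hidx]
      have hSidx : ((n : ℕ) + 1 + 1) = n + 2 := by omega
      rw [hSidx]
      linarith
  -- Main induction: A n - S n ^ (t-1) - c * S n ≥ 0
  set A : ℕ → ℝ := fun n => ∑ i ∈ Finset.range n, w i * u (m + (i : ℤ)) ^ t with hA_def
  have hG : ∀ n : ℕ, n ≤ N → c * S n ≤ A n - S n ^ (t - 1) := by
    intro n hn
    induction n with
    | zero =>
      simp [hS_def, hA_def, Real.zero_rpow (by linarith : t - 1 ≠ 0)]
    | succ n ih =>
      have hn' : n ≤ N := by omega
      have IH := ih hn'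
      have hAsucc : A (n + 1) = A n + w n * u (m + (n : ℤ)) ^ t := by
        simp [hA_def, Finset.sum_range_succ]
      have hub : S (n + 1) ^ (t - 1) - S n ^ (t - 1) ≤
          (t - 1) * S (n + 1) ^ (t - 2) * (S (n + 1) - S n) := by
        have := qi_rpow_ub (p := t - 1) (a := S n) (b := S (n + 1)) ht1
          (hS_nonneg _) (hS_mono _)
        have he : t - 1 - 1 = t - 2 := by ring
        rwa [he] at this
      have hdiff : S (n + 1) - S n = w n * u (m + (n : ℤ)) := by
        rw [hS_succ]; ring
      have hAn := hA n (by omega)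
      have hu0 : 0 ≤ u (m + (n : ℤ)) := hnonneg _
      have hsplit : u (m + (n : ℤ)) ^ t = u (m + (n : ℤ)) * u (m + (n : ℤ)) ^ (t - 1) :=
        hxt _ hu0
      -- increment inequality
      have hinc : c * (w n * u (m + (n : ℤ))) ≤
          w n * u (m + (n : ℤ)) ^ t - (S (n + 1) ^ (t - 1) - S n ^ (t - 1)) := by
        have h1 : S (n + 1) ^ (t - 1) - S n ^ (t - 1) ≤
            (t - 1) * S (n + 1) ^ (t - 2) * (w n * u (m + (n : ℤ))) := by
          rw [← hdiff]; exact hub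
        have h2 : w n * u (m + (n : ℤ)) * c ≤
            w n * u (m + (n : ℤ)) * (u (m + (n : ℤ)) ^ (t - 1) - (t - 1) * S (n + 1) ^ (t - 2)) :=
          mul_le_mul_of_nonneg_left hAn (mul_nonneg (hw0 n).le hu0)
        have h3 : w n * u (m + (n : ℤ)) * u (m + (n : ℤ)) ^ (t - 1) =
            w n * u (m + (n : ℤ)) ^ t := by rw [hsplit]; ring
        nlinarith [h2, h1, h3]
      rw [hAsucc, hS_succ n, mul_add]
      rw [hS_succ n] at hinc
      linarith [IH, hinc]
  have hmain := hG N le_rfl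
  -- convert Icc sums to range sums
  have hconv : ∀ f : ℤ → ℝ, ∑ k ∈ Finset.Icc m (m + (N : ℤ) - 1), f k =
      ∑ i ∈ Finset.range N, f (m + (i : ℤ)) := by
    intro f
    apply Finset.sum_nbij' (i := fun k => (k - m).toNat) (j := fun i => m + (i : ℤ))
    · intro a ha
      simp only [Finset.mem_Icc] at ha
      simp only [Finset.mem_range]
      omega
    · intro a ha
      simp only [Finset.mem_range] at ha
      simp only [Finset.mem_Icc]
      omega
    · intro a ha
      simp only [Finset.mem_Icc] at ha
      omega
    · intro a ha
      simp only [Finset.mem_range] at ha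
      omega
    · intro a ha
      simp only [Finset.mem_Icc] at ha
      congr 1
      omega
  rw [hconv (fun k => (q - 1) * q ^ k * u k ^ t), hconv (fun k => (q - 1) * q ^ k * u k)]
  have heqA : ∑ i ∈ Finset.range N, (q - 1) * q ^ (m + (i : ℤ)) * u (m + (i : ℤ)) ^ t = A N := by
    simp [hA_def, hw_def]
  have heqS : ∑ i ∈ Finset.range N, (q - 1) * q ^ (m + (i : ℤ)) * u (m + (i : ℤ)) = S N := by
    simp [hS_def, hw_def]
  rw [heqA, heqS]
  exact hmain
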